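/- Let ξ ∈ ℝⁿ, let f be a real polynomial of degree d with zero set Z ⊆ ℝⁿ, and suppose ξ ∉ Z and Z is unbounded. Define f^ξ(X) := ‖X−ξ‖^{2d} · f(ξ + ‖X−ξ‖^{−2}(X−ξ)). Then f^ξ is a polynomial and its zero set Z^ξ equals ι_ξ(Z) ∪ {ξ}, where ι_ξ(x) = ξ + (x−ξ)/‖x−ξ‖² is the inversion in the unit sphere centered at ξ; moreover Z^ξ is homeomorphic to the one-point compactification of Z. -/

import Mathlib

set_option maxHeartbeats 1000000

open MvPolynomial

namespace Stmt16Aux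

variable {n : ℕ}

noncomputable def Qx (ξ x : Fin n → ℝ) : ℝ := ∑ j, (x j - ξ j) ^ 2

lemma Qx_nonneg (ξ x : Fin n → ℝ) : 0 ≤ Qx ξ x :=
  Finset.sum_nonneg fun _ _ => sq_nonneg _

lemma Qx_pos {ξ x : Fin n → ℝ} (h : x ≠ ξ) : 0 < Qx ξ x := by
  obtain ⟨i, hi⟩ : ∃ i, x i ≠ ξ i := by
    by_contra hc; push_neg at hc; exact h (funext hc)
  exact Finset.sum_pos' (fun _ _ => sq_nonneg _)
    ⟨i, Finset.mem_univ i, by have := sub_ne_zero_of_ne hi; positivity⟩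

noncomputable def iv (ξ x : Fin n → ℝ) : Fin n → ℝ :=
  fun i => ξ i + (x i - ξ i) / Qx ξ x

lemma iv_ne {ξ x : Fin n → ℝ} (h : x ≠ ξ) : iv ξ x ≠ ξ := by
  obtain ⟨i, hi⟩ : ∃ i, x i ≠ ξ i := by
    by_contra hc; push_neg at hc; exact h (funext hc)
  intro hcon
  have := congrFun hcon i
  simp only [iv] at this
  have hq := (Qx_pos h).ne'
  have : (x i - ξ i) / Qx ξ x = 0 := by linarith
  rw [div_eq_zero_iff] at this
  rcases this with h1 | h1
  · exact hi (by linarith)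
  · exact hq h1

lemma Qx_iv {ξ x : Fin n → ℝ} (h : x ≠ ξ) : Qx ξ (iv ξ x) = 1 / Qx ξ x := by
  have hq := (Qx_pos h).ne'
  simp only [Qx, iv, add_sub_cancel_left, div_pow, ← Finset.sum_div]
  rw [show ∑ j, (x j - ξ j) ^ 2 = Qx ξ x from rfl, sq]
  field_simp

lemma iv_iv {ξ x : Fin n → ℝ} (h : x ≠ ξ) : iv ξ (iv ξ x) = x := by
  have hq := (Qx_pos h).ne'
  funext i
  simp only [iv, Qx_iv h, add_sub_cancel_left]
  field_simp
  ring


variable {n : ℕ}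

noncomputable def shifted (ξ : Fin n → ℝ) (f : MvPolynomial (Fin n) ℝ) : MvPolynomial (Fin n) ℝ :=
  bind₁ (fun i => X i + C (ξ i)) f

lemma totalDegree_shifted (ξ : Fin n → ℝ) (f : MvPolynomial (Fin n) ℝ) :
    (shifted ξ f).totalDegree ≤ f.totalDegree := by
  rw [shifted]
  conv_lhs => rw [f.as_sum]
  rw [map_sum]
  refine (totalDegree_finset_sum _ _).trans (Finset.sup_le fun m hm => ?_)
  rw [bind₁_monomial]
  refine (totalDegree_mul _ _).trans ?_
  rw [totalDegree_C, zero_add]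
  refine le_trans ((totalDegree_finset_prod _ _).trans ?_) (le_totalDegree hm)
  rw [Finsupp.sum]
  refine Finset.sum_le_sum fun i hi => ?_
  refine (totalDegree_pow _ _).trans ?_
  have h1 : (X i + C (ξ i) : MvPolynomial (Fin n) ℝ).totalDegree ≤ 1 := by
    refine (totalDegree_add _ _).trans ?_
    simp [totalDegree_X, totalDegree_C]
  calc m i * (X i + C (ξ i) : MvPolynomial (Fin n) ℝ).totalDegree
      ≤ m i * 1 := Nat.mul_le_mul_left _ h1
    _ = m i := Nat.mul_one _

noncomputable def gpoly (ξ : Fin n → ℝ) (f : MvPolynomial (Fin n) ℝ) (d : ℕ) :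
    MvPolynomial (Fin n) ℝ :=
  ∑ m ∈ (shifted ξ f).support,
    C (coeff m (shifted ξ f)) * ((∏ i, (X i - C (ξ i)) ^ m i) *
      (∑ j, (X j - C (ξ j)) ^ 2) ^ (d - ∑ i, m i))

lemma eval_gpoly (ξ : Fin n → ℝ) (f : MvPolynomial (Fin n) ℝ) (d : ℕ)
    (hd : f.totalDegree ≤ d) {x : Fin n → ℝ} (hx : x ≠ ξ) :
    eval x (gpoly ξ f d) = (Qx ξ x) ^ d * eval (iv ξ x) f := by
  have hq : Qx ξ x ≠ 0 := (Qx_pos hx).ne'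
  have h1 : eval (iv ξ x) f
      = eval (fun i => (x i - ξ i) / Qx ξ x) (shifted ξ f) := by
    rw [shifted, show (eval (fun i => (x i - ξ i) / Qx ξ x) : MvPolynomial (Fin n) ℝ → ℝ)
        = eval₂Hom (RingHom.id ℝ) (fun i => (x i - ξ i) / Qx ξ x) from rfl,
      eval₂Hom_bind₁]
    simp only [eval₂Hom_X', map_add, eval₂Hom_C, RingHom.id_apply]
    exact congrArg (fun y => eval₂Hom (RingHom.id ℝ) y f)
      (funext fun i => by simp [iv, add_comm])
  rw [h1, gpoly, map_sum]
  conv_rhs => rw [eval_eq']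
  rw [Finset.mul_sum]
  refine Finset.sum_congr rfl fun m hm => ?_
  have hM : (∑ i, m i) ≤ d := by
    refine le_trans ?_ (le_trans (totalDegree_shifted ξ f) hd)
    rw [← Finsupp.sum_fintype m (fun _ e => e) (fun _ => rfl)]
    exact le_totalDegree hm
  simp only [map_mul, map_sum, map_pow, map_prod, eval_C, eval_X, map_sub]
  rw [show ∑ j, (x j - ξ j) ^ 2 = Qx ξ x from rfl]
  simp only [div_pow]
  rw [Finset.prod_div_distrib, Finset.prod_pow_eq_pow_sum]
  rw [pow_sub₀ _ hq hM]
  field_simp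

lemma eval_gpoly_self (ξ : Fin n → ℝ) (f : MvPolynomial (Fin n) ℝ) {d : ℕ} (hd0 : 0 < d) :
    eval ξ (gpoly ξ f d) = 0 := by
  rw [gpoly, map_sum]
  refine Finset.sum_eq_zero fun m _ => ?_
  simp only [map_mul, map_sum, map_pow, map_prod, eval_C, eval_X, map_sub,
    sub_self]
  by_cases hM : ∀ i, m i = 0
  · simp [hM, zero_pow hd0.ne', zero_pow]
  · push_neg at hM
    obtain ⟨i, hi⟩ := hM
    rw [Finset.prod_eq_zero (Finset.mem_univ i) (by simp [zero_pow hi])]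
    ring

end Stmt16Aux

open Stmt16Aux in
/-- Let `f` be a real polynomial in `n` variables of degree `d` with
zero set `Z ⊆ ℝⁿ`, let `ξ ∉ Z`, and assume `Z` is unbounded.  Then the function
`f^ξ(X) = ‖X−ξ‖^{2d} · f(ξ + ‖X−ξ‖^{−2}(X−ξ))` is (given by) a polynomial `g`, the zero
set `Z^ξ` of `g` equals `ι_ξ(Z) ∪ {ξ}` where `ι_ξ(x) = ξ + (x−ξ)/‖x−ξ‖²` is the
inversion in the unit sphere centered at `ξ`, and `Z^ξ` is homeomorphic to the
one-point compactification of `Z`.  (Here `‖x−ξ‖² = Σᵢ (xᵢ−ξᵢ)²` is the squared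
Euclidean norm.) -/
theorem stmt_16 (n : ℕ) (f : MvPolynomial (Fin n) ℝ) (d : ℕ)
    (hd : f.totalDegree = d) (ξ : Fin n → ℝ) (hξ : eval ξ f ≠ 0)
    (hunb : ¬ Bornology.IsBounded {x : Fin n → ℝ | eval x f = 0}) :
    ∃ g : MvPolynomial (Fin n) ℝ,
      (∀ x : Fin n → ℝ, x ≠ ξ →
        eval x g = (∑ i, (x i - ξ i) ^ 2) ^ d *
          eval (fun i => ξ i + (x i - ξ i) / (∑ j, (x j - ξ j) ^ 2)) f) ∧
      {x : Fin n → ℝ | eval x g = 0} =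
        (fun x : Fin n → ℝ =>
            (fun i => ξ i + (x i - ξ i) / (∑ j, (x j - ξ j) ^ 2))) ''
          {x : Fin n → ℝ | eval x f = 0} ∪ {ξ} ∧
      Nonempty
        (↥{x : Fin n → ℝ | eval x g = 0} ≃ₜ
          OnePoint ↥{x : Fin n → ℝ | eval x f = 0}) := by
  classical
  have hd1 : 0 < d := by
    rcases Nat.eq_zero_or_pos d with h0 | h
    swap
    · exact h
    exfalso
    apply hunb
    have hZ : {x : Fin n → ℝ | eval x f = 0} = ∅ := by
      ext x
      simp only [Set.mem_setOf_eq, Set.mem_empty_iff_false, iff_false]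
      have hx : eval x f = eval ξ f := by
        rw [eval_eq', eval_eq']
        refine Finset.sum_congr rfl fun m hm => ?_
        have hm0 : ∀ i, m i = 0 :=
          (totalDegree_eq_zero_iff (Fin n) f).mp (by rw [hd, h0]) m hm
        simp [hm0]
      rw [hx]; exact hξ
    rw [hZ]; exact Bornology.isBounded_empty
  have hsub : ∀ x : Fin n → ℝ, eval x f = 0 → x ≠ ξ := fun x hx h => hξ (h ▸ hx)
  have hset : {x : Fin n → ℝ | eval x (gpoly ξ f d) = 0} =
      (fun x : Fin n → ℝ =>
          (fun i => ξ i + (x i - ξ i) / (∑ j, (x j - ξ j) ^ 2))) ''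
        {x : Fin n → ℝ | eval x f = 0} ∪ {ξ} := by
    ext x
    simp only [Set.mem_setOf_eq, Set.mem_union, Set.mem_image, Set.mem_singleton_iff]
    constructor
    · intro hx0
      by_cases hx : x = ξ
      · exact Or.inr hx
      · left
        refine ⟨iv ξ x, ?_, ?_⟩
        · have h1 := eval_gpoly ξ f d hd.le hx
          rw [hx0] at h1
          have hq : (Qx ξ x) ^ d ≠ 0 := pow_ne_zero _ (Qx_pos hx).ne'
          exact (mul_eq_zero.mp h1.symm).resolve_left hq
        · exact iv_iv hx
    · intro hx
      rcases hx with ⟨z, hz, rfl⟩ | hxξ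
      · have hzξ : z ≠ ξ := hsub z hz
        show eval (iv ξ z) (gpoly ξ f d) = 0
        rw [eval_gpoly ξ f d hd.le (iv_ne hzξ), iv_iv hzξ, hz, mul_zero]
      · rw [hxξ]
        exact eval_gpoly_self ξ f hd1
  have hcomp1 : ∀ x : Fin n → ℝ, x ≠ ξ →
      eval x (gpoly ξ f d) = (∑ i, (x i - ξ i) ^ 2) ^ d *
        eval (fun i => ξ i + (x i - ξ i) / (∑ j, (x j - ξ j) ^ 2)) f :=
    fun x hx => eval_gpoly ξ f d hd.le hx
  refine ⟨gpoly ξ f d, hcomp1, hset, ?_⟩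
  -- topology
  have hZclosed : IsClosed {x : Fin n → ℝ | eval x f = 0} :=
    isClosed_eq (MvPolynomial.continuous_eval f) continuous_const
  have hZgclosed : IsClosed {x : Fin n → ℝ | eval x (gpoly ξ f d) = 0} :=
    isClosed_eq (MvPolynomial.continuous_eval (gpoly ξ f d)) continuous_const
  have hξmem : ξ ∈ {x : Fin n → ℝ | eval x (gpoly ξ f d) = 0} := eval_gpoly_self ξ f hd1
  obtain ⟨ε, hε, hball⟩ : ∃ ε > 0,
      Metric.ball ξ ε ⊆ {x : Fin n → ℝ | eval x f = 0}ᶜ :=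
    Metric.mem_nhds_iff.mp (hZclosed.isOpen_compl.mem_nhds hξ)
  have hbound : {x : Fin n → ℝ | eval x (gpoly ξ f d) = 0} ⊆
      Metric.closedBall ξ (1 / ε) := by
    intro y hy
    rw [hset] at hy
    rcases hy with ⟨z, hz, rfl⟩ | hyξ
    · have hzξ : z ≠ ξ := hsub z hz
      have hdist : ε ≤ dist z ξ := by
        by_contra hc
        push_neg at hc
        exact hball (Metric.mem_ball.mpr hc) hz
      obtain ⟨i, hi⟩ : ∃ i, ε ≤ |z i - ξ i| := by
        by_contra hc
        push_neg at hc
        have : dist z ξ < ε := by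
          rw [dist_pi_lt_iff hε]
          intro i
          rw [Real.dist_eq]
          exact hc i
        linarith
      have hQz : ε ^ 2 ≤ Qx ξ z := by
        calc ε ^ 2 ≤ (z i - ξ i) ^ 2 := by
              nlinarith [abs_nonneg (z i - ξ i), sq_abs (z i - ξ i)]
          _ ≤ Qx ξ z := by
              unfold Qx
              exact Finset.single_le_sum (f := fun j => (z j - ξ j) ^ 2)
                (fun j _ => sq_nonneg _) (Finset.mem_univ i)
      rw [Metric.mem_closedBall, dist_pi_le_iff (by positivity)]
      intro j
      rw [Real.dist_eq]
      have h1 : (iv ξ z j - ξ j) ^ 2 ≤ Qx ξ (iv ξ z) := by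
        unfold Qx
        exact Finset.single_le_sum (f := fun k => (iv ξ z k - ξ k) ^ 2)
          (fun k _ => sq_nonneg _) (Finset.mem_univ j)
      rw [Qx_iv hzξ] at h1
      have h2 : 1 / Qx ξ z ≤ 1 / ε ^ 2 :=
        one_div_le_one_div_of_le (by positivity) hQz
      have h3 : (iv ξ z j - ξ j) ^ 2 ≤ (1 / ε) ^ 2 := by
        rw [div_pow, one_pow]
        exact h1.trans h2
      have h4 := Real.sqrt_le_sqrt h3
      rwa [Real.sqrt_sq_eq_abs, Real.sqrt_sq (by positivity)] at h4
    · rw [hyξ]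
      exact Metric.mem_closedBall_self (by positivity)
  have hZgcompact : IsCompact {x : Fin n → ℝ | eval x (gpoly ξ f d) = 0} :=
    (isCompact_closedBall ξ (1 / ε)).of_isClosed_subset hZgclosed hbound
  haveI : CompactSpace ↥{x : Fin n → ℝ | eval x (gpoly ξ f d) = 0} :=
    isCompact_iff_compactSpace.mp hZgcompact
  have hQcont : Continuous fun y : Fin n → ℝ => Qx ξ y :=
    continuous_finset_sum _ fun j _ => ((continuous_apply j).sub continuous_const).pow 2
  have hne : ∀ z : ↥{x : Fin n → ℝ | eval x f = 0}, (z : Fin n → ℝ) ≠ ξ :=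
    fun z => hsub _ z.2
  have hcont : Continuous fun z : ↥{x : Fin n → ℝ | eval x f = 0} =>
      iv ξ (z : Fin n → ℝ) := by
    apply continuous_pi
    intro i
    apply continuous_const.add
    apply Continuous.div
    · exact ((continuous_apply i).comp continuous_subtype_val).sub continuous_const
    · exact hQcont.comp continuous_subtype_val
    · intro z
      exact (Qx_pos (hne z)).ne'
  have hcont0 : Continuous fun x : {x : Fin n → ℝ // x ≠ ξ} => iv ξ (x : Fin n → ℝ) := by
    apply continuous_pi
    intro i
    apply continuous_const.add
    apply Continuous.div
    · exact ((continuous_apply i).comp continuous_subtype_val).sub continuous_const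
    · exact hQcont.comp continuous_subtype_val
    · intro x
      exact (Qx_pos x.2).ne'
  let e : {x : Fin n → ℝ // x ≠ ξ} ≃ₜ {x : Fin n → ℝ // x ≠ ξ} :=
    { toFun := fun x => ⟨iv ξ (x : Fin n → ℝ), iv_ne x.2⟩
      invFun := fun x => ⟨iv ξ (x : Fin n → ℝ), iv_ne x.2⟩
      left_inv := fun x => Subtype.ext (iv_iv x.2)
      right_inv := fun x => Subtype.ext (iv_iv x.2)
      continuous_toFun := hcont0.subtype_mk _
      continuous_invFun := hcont0.subtype_mk _ }
  have hj : Topology.IsEmbedding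
      (fun z : ↥{x : Fin n → ℝ | eval x f = 0} =>
        (⟨(z : Fin n → ℝ), hne z⟩ : {x : Fin n → ℝ // x ≠ ξ})) :=
    Topology.IsEmbedding.of_comp (continuous_subtype_val.subtype_mk _)
      continuous_subtype_val Topology.IsEmbedding.subtypeVal
  have hFemb0 : Topology.IsEmbedding
      (fun z : ↥{x : Fin n → ℝ | eval x f = 0} => iv ξ (z : Fin n → ℝ)) :=
    (Topology.IsEmbedding.subtypeVal.comp e.isEmbedding).comp hj
  let F : ↥{x : Fin n → ℝ | eval x f = 0} → ↥{x : Fin n → ℝ | eval x (gpoly ξ f d) = 0} :=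
    fun z => ⟨iv ξ (z : Fin n → ℝ), by
      rw [hset]
      exact Or.inl ⟨(z : Fin n → ℝ), z.2, rfl⟩⟩
  have hFcont : Continuous F := hcont.subtype_mk _
  have hFemb : Topology.IsEmbedding F :=
    Topology.IsEmbedding.of_comp hFcont continuous_subtype_val hFemb0
  have hrange : Set.range F =
      {(⟨ξ, hξmem⟩ : ↥{x : Fin n → ℝ | eval x (gpoly ξ f d) = 0})}ᶜ := by
    ext y
    simp only [Set.mem_range, Set.mem_compl_iff, Set.mem_singleton_iff]
    constructor
    · rintro ⟨z, rfl⟩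
      intro hcon
      exact iv_ne (hne z) (congrArg Subtype.val hcon)
    · intro hy
      have hyZ : (y : Fin n → ℝ) ∈
          (fun x : Fin n → ℝ =>
              (fun i => ξ i + (x i - ξ i) / (∑ j, (x j - ξ j) ^ 2))) ''
            {x : Fin n → ℝ | eval x f = 0} ∪ {ξ} := hset ▸ y.2
      rcases hyZ with ⟨z, hz, hzy⟩ | h
      · exact ⟨⟨z, hz⟩, Subtype.ext hzy⟩
      · exact absurd (Subtype.ext (Set.mem_singleton_iff.mp h)) hy
  exact ⟨(OnePoint.equivOfIsEmbeddingOfRangeEq ⟨ξ, hξmem⟩ F hFemb hrange).symm⟩
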